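/- arXiv:1811.05747 — 2 statements merged into one kernel-verified Lean document; each statement's English description precedes it below -/
import Mathlib

section
/- Let μ be a finitely additive ℚ_p-valued measure on ℤ_p satisfying the symmetry μ(A) − μ(−A) + μ(1−A) − μ(A−1) = 0 for all clopen sets A (where −A, 1−A, A−1 are images of A under the respective affine maps). Then for every odd nonnegative integer k, the moment ∫_{ℤ_p} x^k dμ(x) vanishes. -/
open Filter Topology
/-- A `ℚ_p`-valued measure on `ℤ_p`: a compatible (and bounded) family of
functions `ℤ/p^nℤ → ℚ_p`, equivalently a finitely additive function on clopen sets. -/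
structure PadicMeasure (p : ℕ) [Fact p.Prime] where
  val : ∀ n : ℕ, ZMod (p ^ n) → ℚ_[p]
  compat : ∀ (n : ℕ) (x : ZMod (p ^ n)),
    val n x = ∑ y ∈ Finset.univ.filter
      (fun y : ZMod (p ^ (n + 1)) =>
        ZMod.castHom (pow_dvd_pow p (Nat.le_succ n)) (ZMod (p ^ n)) y = x),
      val (n + 1) y
  bounded : ∃ C : ℝ, ∀ (n : ℕ) (x : ZMod (p ^ n)), ‖val n x‖ ≤ C

/-- Riemann sum of level `n` of `f` against the measure. -/
noncomputable def PadicMeasure.riemannSum {p : ℕ} [Fact p.Prime]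
    (μ : PadicMeasure p) (f : ℤ_[p] → ℚ_[p]) (n : ℕ) : ℚ_[p] :=
  ∑ i : ZMod (p ^ n), f ((i.val : ℤ_[p])) * μ.val n i

/-- `∫ f dμ = c`, as a limit of Riemann sums. -/
def PadicMeasure.HasIntegral {p : ℕ} [Fact p.Prime]
    (μ : PadicMeasure p) (f : ℤ_[p] → ℚ_[p]) (c : ℚ_[p]) : Prop :=
  Tendsto (μ.riemannSum f) atTop (𝓝 c)

/-- The symmetrizing polynomial, as an integer-valued function. -/
def Pq (q : ℕ) (x : ℤ) : ℤ := x ^ q - (-x) ^ q + (1 - x) ^ q - (x + 1) ^ q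

lemma Pq_eq (q : ℕ) (hq : Odd q) (x : ℤ) :
    Pq q x = -2 * ∑ m ∈ (Finset.range q).filter (fun m => Odd m),
      (q.choose m : ℤ) * x ^ m := by
  have hfil : (Finset.range (q + 1)).filter (fun m => Odd m)
      = insert q ((Finset.range q).filter (fun m => Odd m)) := by
    ext m
    simp only [Finset.mem_filter, Finset.mem_range, Finset.mem_insert, Nat.odd_iff]
    have := hq
    rw [Nat.odd_iff] at this
    omega
  have h1 : (x + 1) ^ q = ∑ m ∈ Finset.range (q + 1), (q.choose m : ℤ) * x ^ m := by
    rw [add_pow]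
    exact Finset.sum_congr rfl fun m _ => by ring
  have h2 : (1 - x) ^ q = ∑ m ∈ Finset.range (q + 1), (-1 : ℤ) ^ m * ((q.choose m : ℤ) * x ^ m) := by
    rw [show (1 - x : ℤ) = -x + 1 by ring, add_pow]
    exact Finset.sum_congr rfl fun m _ => by rw [neg_pow]; ring
  have hneg : (-x) ^ q = -x ^ q := hq.neg_pow x
  have h3 : (1 - x) ^ q - (x + 1) ^ q
      = ∑ m ∈ Finset.range (q + 1), ((-1 : ℤ) ^ m - 1) * ((q.choose m : ℤ) * x ^ m) := by
    rw [h1, h2, ← Finset.sum_sub_distrib]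
    exact Finset.sum_congr rfl fun m _ => by ring
  have h4 : ∑ m ∈ Finset.range (q + 1), ((-1 : ℤ) ^ m - 1) * ((q.choose m : ℤ) * x ^ m)
      = ∑ m ∈ (Finset.range (q + 1)).filter (fun m => Odd m),
          (-2) * ((q.choose m : ℤ) * x ^ m) := by
    rw [Finset.sum_filter]
    refine Finset.sum_congr rfl fun m _ => ?_
    rcases Nat.even_or_odd m with hm | hm
    · simp [hm.neg_one_pow, Nat.not_odd_iff_even.mpr hm]
    · simp [hm, hm.neg_one_pow]
  have hk : q ∉ (Finset.range q).filter (fun m => Odd m) := by simp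
  have h5 : Pq q x = x ^ q + x ^ q + ((1 - x) ^ q - (x + 1) ^ q) := by
    rw [Pq, hneg]; ring
  rw [h5, h3, h4, hfil, Finset.sum_insert hk, Nat.choose_self, Finset.mul_sum]
  push_cast
  ring

section main
variable {p : ℕ} [Fact p.Prime]

lemma symSum (μ : PadicMeasure p)
    (hsym : ∀ (n : ℕ) (i : ZMod (p ^ n)),
      μ.val n i - μ.val n (-i) + μ.val n (1 - i) - μ.val n (i - 1) = 0)
    (n : ℕ) (f : ZMod (p ^ n) → ℚ_[p]) :
    ∑ j : ZMod (p ^ n), (f j - f (-j) + f (1 - j) - f (j + 1)) * μ.val n j = 0 := by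
  have h0 : ∑ j : ZMod (p ^ n),
      f j * (μ.val n j - μ.val n (-j) + μ.val n (1 - j) - μ.val n (j - 1)) = 0 := by
    simp [hsym n]
  have e1 : ∑ j : ZMod (p ^ n), f (-j) * μ.val n j
      = ∑ j : ZMod (p ^ n), f j * μ.val n (-j) :=
    Fintype.sum_equiv (Equiv.neg _) _ _ (fun x => by simp)
  have e2 : ∑ j : ZMod (p ^ n), f (1 - j) * μ.val n j
      = ∑ j : ZMod (p ^ n), f j * μ.val n (1 - j) :=
    Fintype.sum_equiv (Function.Involutive.toPerm (fun x => 1 - x)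
      (fun x => by simp [sub_sub_cancel])) _ _
      (fun x => by simp [Function.Involutive.toPerm, sub_sub_cancel])
  have e3 : ∑ j : ZMod (p ^ n), f (j + 1) * μ.val n j
      = ∑ j : ZMod (p ^ n), f j * μ.val n (j - 1) :=
    Fintype.sum_equiv (Equiv.addRight 1) _ _ (fun x => by simp)
  rw [← h0]
  simp only [sub_mul, add_mul, mul_sub, mul_add, Finset.sum_sub_distrib, Finset.sum_add_distrib]
  rw [e1, e2, e3]

lemma dvd_pow_sub (n q : ℕ) (a : ZMod (p ^ n)) (b : ℤ)
    (h : (b : ZMod (p ^ n)) = a) :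
    ((p ^ n : ℕ) : ℤ) ∣ b ^ q - ((a.val : ℤ)) ^ q := by
  haveI : NeZero (p ^ n) := ⟨pow_ne_zero n (Fact.out : p.Prime).ne_zero⟩
  have ha : (((a.val : ℤ)) : ZMod (p ^ n)) = a := by
    push_cast
    simp [ZMod.natCast_val, ZMod.cast_id]
  have hmod : b ≡ (a.val : ℤ) [ZMOD (p ^ n : ℕ)] :=
    (ZMod.intCast_eq_intCast_iff _ _ _).mp (h.trans ha.symm)
  exact (Int.ModEq.dvd ((hmod.pow q).symm))

/-- The integer "bracket" appearing in the exact symmetry relation. -/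
def brk (n q : ℕ) (j : ZMod (p ^ n)) : ℤ :=
  ((j.val : ℤ)) ^ q - (((-j).val : ℤ)) ^ q + ((((1 : ZMod (p ^ n)) - j).val : ℤ)) ^ q
    - (((j + 1).val : ℤ)) ^ q

lemma dvd_Pq_sub_brk (n q : ℕ) (j : ZMod (p ^ n)) :
    ((p ^ n : ℕ) : ℤ) ∣ Pq q (j.val : ℤ) - brk n q j := by
  haveI : NeZero (p ^ n) := ⟨pow_ne_zero n (Fact.out : p.Prime).ne_zero⟩
  have hj : (((j.val : ℤ)) : ZMod (p ^ n)) = j := by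
    push_cast
    simp [ZMod.natCast_val, ZMod.cast_id]
  have d1 : ((p ^ n : ℕ) : ℤ) ∣ (-(j.val : ℤ)) ^ q - (((-j).val : ℤ)) ^ q :=
    dvd_pow_sub n q (-j) _ (by push_cast [hj]; ring)
  have d2 : ((p ^ n : ℕ) : ℤ) ∣ (1 - (j.val : ℤ)) ^ q
      - ((((1 : ZMod (p ^ n)) - j).val : ℤ)) ^ q :=
    dvd_pow_sub n q (1 - j) _ (by push_cast [hj]; ring)
  have d3 : ((p ^ n : ℕ) : ℤ) ∣ ((j.val : ℤ) + 1) ^ q - (((j + 1).val : ℤ)) ^ q :=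
    dvd_pow_sub n q (j + 1) _ (by push_cast [hj]; ring)
  have : Pq q (j.val : ℤ) - brk n q j
      = -((-(j.val : ℤ)) ^ q - (((-j).val : ℤ)) ^ q)
        + ((1 - (j.val : ℤ)) ^ q - ((((1 : ZMod (p ^ n)) - j).val : ℤ)) ^ q)
        - (((j.val : ℤ) + 1) ^ q - (((j + 1).val : ℤ)) ^ q) := by
    rw [Pq, brk]; ring
  rw [this]
  exact dvd_sub (dvd_add (dvd_neg.mpr d1) d2) d3

end main

section key
variable {p : ℕ} [Fact p.Prime]

lemma riemannSum_pow_eq (μ : PadicMeasure p) (m n : ℕ) :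
    μ.riemannSum (fun x => (x : ℚ_[p]) ^ m) n
      = ∑ j : ZMod (p ^ n), ((j.val : ℚ_[p])) ^ m * μ.val n j := rfl

lemma key_bound (μ : PadicMeasure p)
    (hsym : ∀ (n : ℕ) (i : ZMod (p ^ n)),
      μ.val n i - μ.val n (-i) + μ.val n (1 - i) - μ.val n (i - 1) = 0)
    {C : ℝ} (hC : ∀ (n : ℕ) (x : ZMod (p ^ n)), ‖μ.val n x‖ ≤ C) (hC0 : 0 ≤ C)
    (q : ℕ) (hq : Odd q) (n : ℕ) :
    ‖(2 : ℚ_[p]) * ∑ m ∈ (Finset.range q).filter (fun m => Odd m),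
        (q.choose m : ℚ_[p]) * μ.riemannSum (fun x => (x : ℚ_[p]) ^ m) n‖
      ≤ C * (p : ℝ) ^ (-n : ℤ) := by
  -- the exact vanishing of the bracket sum
  have hZ : ∑ j : ZMod (p ^ n), ((brk n q j : ℤ) : ℚ_[p]) * μ.val n j = 0 := by
    have h := symSum μ hsym n (fun i => ((i.val : ℚ_[p])) ^ q)
    rw [← h]
    refine Finset.sum_congr rfl fun j _ => ?_
    rw [brk]
    push_cast
    ring
  -- replace the bracket by the polynomial, with controlled error
  have hP : ∑ j : ZMod (p ^ n), ((Pq q (j.val : ℤ) : ℤ) : ℚ_[p]) * μ.val n j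
      = ∑ j : ZMod (p ^ n), (((Pq q (j.val : ℤ) - brk n q j : ℤ)) : ℚ_[p]) * μ.val n j := by
    rw [← sub_zero (∑ j : ZMod (p ^ n), ((Pq q (j.val : ℤ) : ℤ) : ℚ_[p]) * μ.val n j), ← hZ,
      ← Finset.sum_sub_distrib]
    refine Finset.sum_congr rfl fun j _ => ?_
    push_cast
    ring
  have hsumnorm : ‖∑ j : ZMod (p ^ n), ((Pq q (j.val : ℤ) : ℤ) : ℚ_[p]) * μ.val n j‖
      ≤ (p : ℝ) ^ (-n : ℤ) * C := by
    rw [hP]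
    refine IsUltrametricDist.norm_sum_le_of_forall_le_of_nonneg (by positivity) fun j _ => ?_
    rw [norm_mul]
    refine mul_le_mul ?_ (hC n j) (norm_nonneg _) (by positivity)
    refine (Padic.norm_int_le_pow_iff_dvd _ n).mpr ?_
    exact_mod_cast dvd_Pq_sub_brk n q j
  -- expand the polynomial into monomials
  have hexp : ∑ j : ZMod (p ^ n), ((Pq q (j.val : ℤ) : ℤ) : ℚ_[p]) * μ.val n j
      = -((2 : ℚ_[p]) * ∑ m ∈ (Finset.range q).filter (fun m => Odd m),
          (q.choose m : ℚ_[p]) * μ.riemannSum (fun x => (x : ℚ_[p]) ^ m) n) := by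
    have step1 : ∀ j : ZMod (p ^ n), ((Pq q (j.val : ℤ) : ℤ) : ℚ_[p]) * μ.val n j
        = ∑ m ∈ (Finset.range q).filter (fun m => Odd m),
            -((2 : ℚ_[p]) * ((q.choose m : ℚ_[p]) * (((j.val : ℚ_[p])) ^ m * μ.val n j))) := by
      intro j
      rw [Pq_eq q hq]
      push_cast
      rw [Finset.mul_sum, Finset.sum_mul]
      exact Finset.sum_congr rfl fun m _ => by ring
    calc ∑ j : ZMod (p ^ n), ((Pq q (j.val : ℤ) : ℤ) : ℚ_[p]) * μ.val n j
        = ∑ j : ZMod (p ^ n), ∑ m ∈ (Finset.range q).filter (fun m => Odd m),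
            -((2 : ℚ_[p]) * ((q.choose m : ℚ_[p]) * (((j.val : ℚ_[p])) ^ m * μ.val n j))) :=
          Finset.sum_congr rfl fun j _ => step1 j
      _ = ∑ m ∈ (Finset.range q).filter (fun m => Odd m), ∑ j : ZMod (p ^ n),
            -((2 : ℚ_[p]) * ((q.choose m : ℚ_[p]) * (((j.val : ℚ_[p])) ^ m * μ.val n j))) :=
          Finset.sum_comm
      _ = -((2 : ℚ_[p]) * ∑ m ∈ (Finset.range q).filter (fun m => Odd m),
            (q.choose m : ℚ_[p]) * μ.riemannSum (fun x => (x : ℚ_[p]) ^ m) n) := by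
          rw [Finset.mul_sum, ← Finset.sum_neg_distrib]
          refine Finset.sum_congr rfl fun m _ => ?_
          rw [riemannSum_pow_eq, Finset.mul_sum, Finset.mul_sum, ← Finset.sum_neg_distrib]
  calc ‖(2 : ℚ_[p]) * ∑ m ∈ (Finset.range q).filter (fun m => Odd m),
        (q.choose m : ℚ_[p]) * μ.riemannSum (fun x => (x : ℚ_[p]) ^ m) n‖
      = ‖∑ j : ZMod (p ^ n), ((Pq q (j.val : ℤ) : ℤ) : ℚ_[p]) * μ.val n j‖ := by
        rw [hexp, norm_neg]
    _ ≤ (p : ℝ) ^ (-n : ℤ) * C := hsumnorm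
    _ = C * (p : ℝ) ^ (-n : ℤ) := mul_comm _ _

end key

/-- If `μ(A) − μ(−A) + μ(1−A) − μ(A−1) = 0` for all clopen `A`, then every odd
moment `∫ x^k dμ` vanishes. -/
theorem odd_moments_vanish (p : ℕ) [Fact p.Prime] (μ : PadicMeasure p)
    (hsym : ∀ (n : ℕ) (i : ZMod (p ^ n)),
      μ.val n i - μ.val n (-i) + μ.val n (1 - i) - μ.val n (i - 1) = 0)
    (k : ℕ) (hk : Odd k) :
    μ.HasIntegral (fun x => (x : ℚ_[p]) ^ k) 0 := by
  obtain ⟨C, hC⟩ := μ.bounded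
  have hC' : ∀ (n : ℕ) (x : ZMod (p ^ n)), ‖μ.val n x‖ ≤ max C 0 :=
    fun n x => (hC n x).trans (le_max_left _ _)
  have hC'0 : (0 : ℝ) ≤ max C 0 := le_max_right _ _
  have h2 : (0 : ℝ) < ‖(2 : ℚ_[p])‖ := norm_pos_iff.mpr two_ne_zero
  set D : ℝ := max C 0 / ‖(2 : ℚ_[p])‖ with hD
  -- the key relation, with the factor 2 divided out
  have hR : ∀ (q : ℕ), Odd q → ∀ (n : ℕ),
      ‖∑ m ∈ (Finset.range q).filter (fun m => Odd m),
        (q.choose m : ℚ_[p]) * μ.riemannSum (fun x => (x : ℚ_[p]) ^ m) n‖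
      ≤ D * (p : ℝ) ^ (-n : ℤ) := by
    intro q hq n
    have hkey := key_bound μ hsym hC' hC'0 q hq n
    rw [norm_mul] at hkey
    calc ‖∑ m ∈ (Finset.range q).filter (fun m => Odd m),
          (q.choose m : ℚ_[p]) * μ.riemannSum (fun x => (x : ℚ_[p]) ^ m) n‖
        = (‖(2 : ℚ_[p])‖ * ‖∑ m ∈ (Finset.range q).filter (fun m => Odd m),
            (q.choose m : ℚ_[p]) * μ.riemannSum (fun x => (x : ℚ_[p]) ^ m) n‖) / ‖(2 : ℚ_[p])‖ :=
          by field_simp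
      _ ≤ (max C 0 * (p : ℝ) ^ (-n : ℤ)) / ‖(2 : ℚ_[p])‖ := by
          exact (div_le_div_iff_of_pos_right h2).mpr hkey
      _ = D * (p : ℝ) ^ (-n : ℤ) := by rw [hD]; ring
  -- the upper bound tends to zero
  have hpinv : (p : ℝ)⁻¹ < 1 := by
    apply inv_lt_one_of_one_lt₀
    exact_mod_cast (Fact.out : p.Prime).one_lt
  have hpow : Tendsto (fun n : ℕ => D * (p : ℝ) ^ (-n : ℤ)) atTop (𝓝 0) := by
    have hz : ∀ n : ℕ, (p : ℝ) ^ (-n : ℤ) = ((p : ℝ)⁻¹) ^ n := by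
      intro n
      rw [zpow_neg, zpow_natCast, inv_pow]
    simp only [hz]
    have := (tendsto_pow_atTop_nhds_zero_of_lt_one (by positivity) hpinv).const_mul D
    simpa using this
  -- main induction
  have main : ∀ k : ℕ, Odd k →
      Tendsto (fun n => μ.riemannSum (fun x => (x : ℚ_[p]) ^ k) n) atTop (𝓝 0) := by
    intro k
    induction k using Nat.strong_induction_on with
    | _ k IH =>
      intro hk
      have hq : Odd (k + 2) := by
        rcases hk with ⟨t, ht⟩; exact ⟨t + 1, by omega⟩
      have hfil : (Finset.range (k + 2)).filter (fun m => Odd m)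
          = insert k ((Finset.range k).filter (fun m => Odd m)) := by
        ext m
        simp only [Finset.mem_filter, Finset.mem_range, Finset.mem_insert, Nat.odd_iff]
        have := hk
        rw [Nat.odd_iff] at this
        omega
      have hknot : k ∉ (Finset.range k).filter (fun m => Odd m) := by simp
      -- the tail sum tends to zero by induction
      have hS : Tendsto (fun n => ∑ m ∈ (Finset.range k).filter (fun m => Odd m),
          ((k + 2).choose m : ℚ_[p]) * μ.riemannSum (fun x => (x : ℚ_[p]) ^ m) n)
          atTop (𝓝 0) := by
        have : Tendsto (fun n => ∑ m ∈ (Finset.range k).filter (fun m => Odd m),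
            ((k + 2).choose m : ℚ_[p]) * μ.riemannSum (fun x => (x : ℚ_[p]) ^ m) n)
            atTop (𝓝 (∑ m ∈ (Finset.range k).filter (fun m => Odd m), 0)) := by
          refine tendsto_finset_sum _ fun m hm => ?_
          rw [Finset.mem_filter, Finset.mem_range] at hm
          have := (IH m hm.1 hm.2).const_mul (((k + 2).choose m : ℚ_[p]))
          simpa using this
        simpa using this
      -- the whole sum tends to zero by the key bound
      have hT : Tendsto (fun n => ∑ m ∈ (Finset.range (k + 2)).filter (fun m => Odd m),
          ((k + 2).choose m : ℚ_[p]) * μ.riemannSum (fun x => (x : ℚ_[p]) ^ m) n)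
          atTop (𝓝 0) := by
        rw [tendsto_zero_iff_norm_tendsto_zero]
        exact squeeze_zero (fun n => norm_nonneg _) (fun n => hR (k + 2) hq n) hpow
      have hc0 : (((k + 2).choose k : ℚ_[p])) ≠ 0 :=
        Nat.cast_ne_zero.mpr (Nat.choose_pos (by omega)).ne'
      have hsplit : ∀ n, ∑ m ∈ (Finset.range (k + 2)).filter (fun m => Odd m),
          ((k + 2).choose m : ℚ_[p]) * μ.riemannSum (fun x => (x : ℚ_[p]) ^ m) n
          = ((k + 2).choose k : ℚ_[p]) * μ.riemannSum (fun x => (x : ℚ_[p]) ^ k) n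
            + ∑ m ∈ (Finset.range k).filter (fun m => Odd m),
              ((k + 2).choose m : ℚ_[p]) * μ.riemannSum (fun x => (x : ℚ_[p]) ^ m) n := by
        intro n
        rw [hfil, Finset.sum_insert hknot]
      have h := (hT.sub hS).const_mul ((((k + 2).choose k : ℚ_[p]))⁻¹)
      rw [sub_zero, mul_zero] at h
      have heq : (fun n => (((k + 2).choose k : ℚ_[p]))⁻¹
          * ((∑ m ∈ (Finset.range (k + 2)).filter (fun m => Odd m),
              ((k + 2).choose m : ℚ_[p]) * μ.riemannSum (fun x => (x : ℚ_[p]) ^ m) n)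
            - ∑ m ∈ (Finset.range k).filter (fun m => Odd m),
              ((k + 2).choose m : ℚ_[p]) * μ.riemannSum (fun x => (x : ℚ_[p]) ^ m) n))
          = fun n => μ.riemannSum (fun x => (x : ℚ_[p]) ^ k) n := by
        funext n
        rw [hsplit n]
        field_simp
        ring
      rw [heq] at h
      exact h
  exact main k hk
end

section
/- Let r ≥ 1 and let G be a ℚ_p-valued measure on (ℤ_p)^r satisfying the symmetry G(A) − G(−A) + G(1−A) − G(A−1) = 0 (coordinatewise affine maps) as in the Euler-relation setting. Fix nonnegative integers n₁,…,n_r with sum m and a residue vector (i₁,…,i_r) ∈ (ℤ/p^nℤ)^r. Then ∫_{(i₁,…,i_r)+p^n(ℤ_p)^r} φ dG + (−1)^{m+1} ∫_{(−i₁,…,−i_r)+p^n(ℤ_p)^r} φ dG + (−1)^m ∫_{(−i₁+1,…,−i_r+1)+p^n(ℤ_p)^r} φ₋ dG − ∫_{(i₁−1,…,i_r−1)+p^n(ℤ_p)^r} φ₊ dG = 0, where φ(x) = (x₁−x₂)^{n₁}⋯(x_{r−1}−x_r)^{n_{r−1}} x_r^{n_r}, φ₋(x) = (x₁−x₂)^{n₁}⋯(x_{r−1}−x_r)^{n_{r−1}}(x_r−1)^{n_r},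 and φ₊(x) = (x₁−x₂)^{n₁}⋯(x_{r−1}−x_r)^{n_{r−1}}(x_r+1)^{n_r}. -/
open Filter Topology

/-- A `ℚ_p`-valued measure on `(ℤ_p)^r`: a compatible bounded family of functions
on `(ℤ/p^nℤ)^r`. -/
structure PadicMeasureV (p : ℕ) [Fact p.Prime] (r : ℕ) where
  val : ∀ n : ℕ, (Fin r → ZMod (p ^ n)) → ℚ_[p]
  compat : ∀ (n : ℕ) (x : Fin r → ZMod (p ^ n)),
    val n x = ∑ y ∈ Finset.univ.filter
      (fun y : Fin r → ZMod (p ^ (n + 1)) =>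
        (fun j => ZMod.castHom (pow_dvd_pow p (Nat.le_succ n)) (ZMod (p ^ n)) (y j)) = x),
      val (n + 1) y
  bounded : ∃ C : ℝ, ∀ (n : ℕ) (x : Fin r → ZMod (p ^ n)), ‖val n x‖ ≤ C
/-- Riemann sum of level `n` of `f` against the measure. -/
noncomputable def PadicMeasureV.riemannSum {p : ℕ} [Fact p.Prime] {r : ℕ}
    (μ : PadicMeasureV p r) (f : (Fin r → ℤ_[p]) → ℚ_[p]) (n : ℕ) : ℚ_[p] :=
  ∑ i : Fin r → ZMod (p ^ n), f (fun j => ((i j).val : ℤ_[p])) * μ.val n i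

/-- `∫_{i + p^n (ℤ_p)^r} f dμ = c`: Riemann sums restricted to the residue class
`(i₁,…,i_r) + p^n(ℤ_p)^r`. -/
def PadicMeasureV.HasIntegralOn {p : ℕ} [Fact p.Prime] {r : ℕ}
    (μ : PadicMeasureV p r) (f : (Fin r → ℤ_[p]) → ℚ_[p])
    (n : ℕ) (i : Fin r → ZMod (p ^ n)) (c : ℚ_[p]) : Prop :=
  Filter.Tendsto (fun k : ℕ =>
      ∑ y ∈ Finset.univ.filter
        (fun y : Fin r → ZMod (p ^ (n + k)) =>
          (fun j => ZMod.castHom (pow_dvd_pow p (Nat.le_add_right n k)) (ZMod (p ^ n)) (y j))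
            = i),
        f (fun j => ((y j).val : ℤ_[p])) * μ.val (n + k) y)
    Filter.atTop (nhds c)


section Aux

variable {p : ℕ} [Fact p.Prime]

/-- The basic polynomial in `ℤ_p` coordinates, with a shift `c` in the last variable. -/
private noncomputable def PhiAux (p : ℕ) [Fact p.Prime] (r : ℕ) (e : Fin (r + 1) → ℕ)
    (c : ℤ_[p]) (x : Fin (r + 1) → ℤ_[p]) : ℤ_[p] :=
  (∏ j : Fin r, (x j.castSucc - x j.succ) ^ e j.castSucc) * (x (Fin.last r) + c) ^ e (Fin.last r)

private lemma phi_cast₀ (r : ℕ) (e : Fin (r + 1) → ℕ) (x : Fin (r + 1) → ℤ_[p]) :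
    (∏ j : Fin r, ((x j.castSucc : ℚ_[p]) - (x j.succ : ℚ_[p])) ^ e j.castSucc)
      * (x (Fin.last r) : ℚ_[p]) ^ e (Fin.last r) = ((PhiAux p r e 0 x : ℤ_[p]) : ℚ_[p]) := by
  simp only [PhiAux, add_zero]
  have hprod : ((∏ j : Fin r, (x j.castSucc - x j.succ) ^ e j.castSucc : ℤ_[p]) : ℚ_[p])
      = ∏ j : Fin r, ((x j.castSucc : ℚ_[p]) - (x j.succ : ℚ_[p])) ^ e j.castSucc := by
    rw [show ((∏ j : Fin r, (x j.castSucc - x j.succ) ^ e j.castSucc : ℤ_[p]) : ℚ_[p])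
        = PadicInt.Coe.ringHom (∏ j : Fin r, (x j.castSucc - x j.succ) ^ e j.castSucc) from rfl,
      map_prod]
    rfl
  push_cast [hprod]
  ring

private lemma phi_castm (r : ℕ) (e : Fin (r + 1) → ℕ) (x : Fin (r + 1) → ℤ_[p]) :
    (∏ j : Fin r, ((x j.castSucc : ℚ_[p]) - (x j.succ : ℚ_[p])) ^ e j.castSucc)
      * ((x (Fin.last r) : ℚ_[p]) - 1) ^ e (Fin.last r)
      = ((PhiAux p r e (-1) x : ℤ_[p]) : ℚ_[p]) := by
  simp only [PhiAux]
  have hprod : ((∏ j : Fin r, (x j.castSucc - x j.succ) ^ e j.castSucc : ℤ_[p]) : ℚ_[p])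
      = ∏ j : Fin r, ((x j.castSucc : ℚ_[p]) - (x j.succ : ℚ_[p])) ^ e j.castSucc := by
    rw [show ((∏ j : Fin r, (x j.castSucc - x j.succ) ^ e j.castSucc : ℤ_[p]) : ℚ_[p])
        = PadicInt.Coe.ringHom (∏ j : Fin r, (x j.castSucc - x j.succ) ^ e j.castSucc) from rfl,
      map_prod]
    rfl
  push_cast [hprod]
  ring

private lemma phi_castp (r : ℕ) (e : Fin (r + 1) → ℕ) (x : Fin (r + 1) → ℤ_[p]) :
    (∏ j : Fin r, ((x j.castSucc : ℚ_[p]) - (x j.succ : ℚ_[p])) ^ e j.castSucc)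
      * ((x (Fin.last r) : ℚ_[p]) + 1) ^ e (Fin.last r)
      = ((PhiAux p r e 1 x : ℤ_[p]) : ℚ_[p]) := by
  simp only [PhiAux]
  have hprod : ((∏ j : Fin r, (x j.castSucc - x j.succ) ^ e j.castSucc : ℤ_[p]) : ℚ_[p])
      = ∏ j : Fin r, ((x j.castSucc : ℚ_[p]) - (x j.succ : ℚ_[p])) ^ e j.castSucc := by
    rw [show ((∏ j : Fin r, (x j.castSucc - x j.succ) ^ e j.castSucc : ℤ_[p]) : ℚ_[p])
        = PadicInt.Coe.ringHom (∏ j : Fin r, (x j.castSucc - x j.succ) ^ e j.castSucc) from rfl,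
      map_prod]
    rfl
  push_cast [hprod]
  ring

private lemma phi_neg (r : ℕ) (e : Fin (r + 1) → ℕ) (x : Fin (r + 1) → ℤ_[p]) :
    PhiAux p r e 0 (fun j => -(x j)) = (-1) ^ (∑ j, e j) * PhiAux p r e 0 x := by
  unfold PhiAux
  have h1 : (fun j : Fin r => (-(x j.castSucc) - -(x j.succ)) ^ e j.castSucc)
      = fun j : Fin r => (-1 : ℤ_[p]) ^ e j.castSucc * (x j.castSucc - x j.succ) ^ e j.castSucc := by
    funext j
    rw [show -(x j.castSucc) - -(x j.succ) = -(x j.castSucc - x j.succ) by ring, neg_pow]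
  rw [h1, Finset.prod_mul_distrib, Finset.prod_pow_eq_pow_sum,
    show -(x (Fin.last r)) + 0 = -(x (Fin.last r) + 0) by ring, neg_pow,
    Fin.sum_univ_castSucc (f := e), pow_add]
  ring

private lemma phi_neg_add_one (r : ℕ) (e : Fin (r + 1) → ℕ) (x : Fin (r + 1) → ℤ_[p]) :
    PhiAux p r e (-1) (fun j => -(x j) + 1) = (-1) ^ (∑ j, e j) * PhiAux p r e 0 x := by
  unfold PhiAux
  have h1 : (fun j : Fin r => (-(x j.castSucc) + 1 - (-(x j.succ) + 1)) ^ e j.castSucc)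
      = fun j : Fin r => (-1 : ℤ_[p]) ^ e j.castSucc * (x j.castSucc - x j.succ) ^ e j.castSucc := by
    funext j
    rw [show -(x j.castSucc) + 1 - (-(x j.succ) + 1) = -(x j.castSucc - x j.succ) by ring, neg_pow]
  rw [h1, Finset.prod_mul_distrib, Finset.prod_pow_eq_pow_sum,
    show -(x (Fin.last r)) + 1 + (-1) = -(x (Fin.last r) + 0) by ring, neg_pow,
    Fin.sum_univ_castSucc (f := e), pow_add]
  ring

private lemma phi_sub_one (r : ℕ) (e : Fin (r + 1) → ℕ) (x : Fin (r + 1) → ℤ_[p]) :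
    PhiAux p r e 1 (fun j => x j - 1) = PhiAux p r e 0 x := by
  unfold PhiAux
  have h1 : ∀ j : Fin r, x j.castSucc - 1 - (x j.succ - 1) = x j.castSucc - x j.succ :=
    fun j => by ring
  simp only [h1, show x (Fin.last r) - 1 + 1 = x (Fin.last r) + 0 by ring]

private lemma phi_norm_sub (r : ℕ) (e : Fin (r + 1) → ℕ) (c : ℤ_[p]) (N : ℕ)
    {x y : Fin (r + 1) → ℤ_[p]}
    (h : ∀ j, PadicInt.toZModPow N (x j) = PadicInt.toZModPow N (y j)) :
    ‖PhiAux p r e c x - PhiAux p r e c y‖ ≤ (p : ℝ) ^ (-N : ℤ) := by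
  rw [PadicInt.norm_le_pow_iff_mem_span_pow, ← PadicInt.ker_toZModPow, RingHom.mem_ker, map_sub]
  have hx : PadicInt.toZModPow N (PhiAux p r e c x)
      = PadicInt.toZModPow N (PhiAux p r e c y) := by
    simp only [PhiAux, map_mul, map_prod, map_pow, map_sub, map_add, h]
  rw [hx, sub_self]

private lemma toZModPow_rep (N : ℕ) (a : ZMod (p ^ N)) :
    PadicInt.toZModPow N ((a.val : ℤ_[p])) = a := by
  haveI : NeZero (p ^ N) := ⟨pow_ne_zero _ (Fact.out : p.Prime).ne_zero⟩
  rw [map_natCast]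
  exact ZMod.natCast_rightInverse a

private lemma padic_norm_add_add_sub_le (A B C : ℚ_[p]) {M : ℝ}
    (hA : ‖A‖ ≤ M) (hB : ‖B‖ ≤ M) (hC : ‖C‖ ≤ M) : ‖A + B - C‖ ≤ M := by
  rw [sub_eq_add_neg]
  refine (IsUltrametricDist.norm_add_le_max _ _).trans
    (max_le ((IsUltrametricDist.norm_add_le_max _ _).trans (max_le hA hB)) ?_)
  rwa [norm_neg]

end Aux

/-- Under the rhombus symmetry of `G`, the four coset integrals of
`φ(x) = (x₁−x₂)^{n₁}⋯(x_{r−1}−x_r)^{n_{r−1}} x_r^{n_r}` (and its shifted variants `φ∓`)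
over the cosets of `(i₁,…,i_r)`, `(−i₁,…,−i_r)`, `(−i₁+1,…,−i_r+1)`, `(i₁−1,…,i_r−1)`
satisfy `c₁ + (−1)^{m+1} c₂ + (−1)^m c₃ − c₄ = 0`, where `m = n₁+⋯+n_r`. -/
theorem coset_integral_relation (p : ℕ) [Fact p.Prime] (r : ℕ)
    (G : PadicMeasureV p (r + 1))
    (hsym : ∀ (N : ℕ) (i : Fin (r + 1) → ZMod (p ^ N)),
      G.val N i - G.val N (fun j => -(i j)) + G.val N (fun j => -(i j) + 1)
        - G.val N (fun j => i j - 1) = 0)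
    (e : Fin (r + 1) → ℕ) (m : ℕ) (hm : m = ∑ j, e j)
    (n : ℕ) (i : Fin (r + 1) → ZMod (p ^ n)) (c₁ c₂ c₃ c₄ : ℚ_[p])
    (h₁ : G.HasIntegralOn (fun x =>
      (∏ j : Fin r, ((x j.castSucc : ℚ_[p]) - (x j.succ : ℚ_[p])) ^ e j.castSucc)
        * (x (Fin.last r) : ℚ_[p]) ^ e (Fin.last r)) n i c₁)
    (h₂ : G.HasIntegralOn (fun x =>
      (∏ j : Fin r, ((x j.castSucc : ℚ_[p]) - (x j.succ : ℚ_[p])) ^ e j.castSucc)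
        * (x (Fin.last r) : ℚ_[p]) ^ e (Fin.last r)) n (fun j => -(i j)) c₂)
    (h₃ : G.HasIntegralOn (fun x =>
      (∏ j : Fin r, ((x j.castSucc : ℚ_[p]) - (x j.succ : ℚ_[p])) ^ e j.castSucc)
        * ((x (Fin.last r) : ℚ_[p]) - 1) ^ e (Fin.last r)) n (fun j => -(i j) + 1) c₃)
    (h₄ : G.HasIntegralOn (fun x =>
      (∏ j : Fin r, ((x j.castSucc : ℚ_[p]) - (x j.succ : ℚ_[p])) ^ e j.castSucc)
        * ((x (Fin.last r) : ℚ_[p]) + 1) ^ e (Fin.last r)) n (fun j => i j - 1) c₄) :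
    c₁ + (-1 : ℚ_[p]) ^ (m + 1) * c₂ + (-1 : ℚ_[p]) ^ m * c₃ - c₄ = 0 := by
  classical
  obtain ⟨C, hC⟩ := G.bounded
  set C' : ℝ := max C 0 with hC'def
  have hC0 : (0:ℝ) ≤ C' := le_max_right _ _
  have hCle : ∀ (N : ℕ) (x : Fin (r + 1) → ZMod (p ^ N)), ‖G.val N x‖ ≤ C' :=
    fun N x => (hC N x).trans (le_max_left _ _)
  have hp1 : (1:ℝ) < p := by exact_mod_cast (Fact.out : p.Prime).one_lt
  have hp0 : (p:ℝ) ≠ 0 := by positivity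
  unfold PadicMeasureV.HasIntegralOn at h₁ h₂ h₃ h₄
  have hL := ((h₁.add (h₂.const_mul ((-1 : ℚ_[p]) ^ (m + 1)))).add
      (h₃.const_mul ((-1 : ℚ_[p]) ^ m))).sub h₄
  -- the bound sequence tends to 0
  have hbnd : Tendsto (fun k : ℕ => C' * (p:ℝ) ^ (-((n + k : ℕ) : ℤ))) atTop (nhds 0) := by
    have h0 : Tendsto (fun k : ℕ => ((p:ℝ)⁻¹) ^ k) atTop (nhds 0) := by
      refine tendsto_pow_atTop_nhds_zero_of_lt_one (by positivity) ?_
      rw [inv_lt_one_iff₀]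
      right; exact hp1
    have heq : ∀ k : ℕ, (C' * (p:ℝ) ^ (-(n : ℤ))) * ((p:ℝ)⁻¹) ^ k
        = C' * (p:ℝ) ^ (-((n + k : ℕ) : ℤ)) := by
      intro k
      rw [show (-((n + k : ℕ) : ℤ)) = (-(n : ℤ)) + (-(k : ℤ)) by push_cast; ring,
        zpow_add₀ hp0, show ((p:ℝ)) ^ (-(k : ℤ)) = ((p:ℝ)⁻¹) ^ k by
          rw [zpow_neg, zpow_natCast, inv_pow]]
      ring
    have := h0.const_mul (C' * (p:ℝ) ^ (-(n : ℤ)))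
    rw [mul_zero] at this
    exact this.congr heq
  refine tendsto_nhds_unique hL (squeeze_zero_norm (fun k => ?_) hbnd)
  -- per-level bound
  have hb₂ : Function.Bijective
      (fun z : Fin (r + 1) → ZMod (p ^ (n + k)) => fun j => -(z j)) :=
    Function.Involutive.bijective (fun z => by funext j; simp)
  have hb₃ : Function.Bijective
      (fun z : Fin (r + 1) → ZMod (p ^ (n + k)) => fun j => -(z j) + 1) :=
    Function.Involutive.bijective (fun z => by funext j; ring)
  have hb₄ : Function.Bijective
      (fun z : Fin (r + 1) → ZMod (p ^ (n + k)) => fun j => z j - 1) := by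
    constructor
    · intro a b h
      funext j
      have := congrFun h j
      simpa using this
    · intro y
      exact ⟨fun j => y j + 1, by funext j; ring⟩
  have reindex : ∀ (g : (Fin (r + 1) → ZMod (p ^ (n + k))) → ℚ_[p])
      (σ : (Fin (r + 1) → ZMod (p ^ (n + k))) → (Fin (r + 1) → ZMod (p ^ (n + k))))
      (i' : Fin (r + 1) → ZMod (p ^ n)), Function.Bijective σ →
      (∀ z : Fin (r + 1) → ZMod (p ^ (n + k)),
        ((fun j => ZMod.castHom (pow_dvd_pow p (Nat.le_add_right n k)) (ZMod (p ^ n)) (z j)) = i)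
        ↔ ((fun j => ZMod.castHom (pow_dvd_pow p (Nat.le_add_right n k)) (ZMod (p ^ n)) (σ z j))
            = i')) →
      (∑ y ∈ Finset.univ.filter
          (fun y : Fin (r + 1) → ZMod (p ^ (n + k)) =>
            (fun j => ZMod.castHom (pow_dvd_pow p (Nat.le_add_right n k)) (ZMod (p ^ n)) (y j))
              = i'), g y)
        = ∑ z ∈ Finset.univ.filter
          (fun y : Fin (r + 1) → ZMod (p ^ (n + k)) =>
            (fun j => ZMod.castHom (pow_dvd_pow p (Nat.le_add_right n k)) (ZMod (p ^ n)) (y j))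
              = i), g (σ z) := by
    intro g σ i' hσ hi
    refine (Finset.sum_bijective σ hσ (fun z => ?_) (fun z _ => rfl)).symm
    simp only [Finset.mem_filter, Finset.mem_univ, true_and]
    exact hi z
  have hiff₂ : ∀ z : Fin (r + 1) → ZMod (p ^ (n + k)),
      ((fun j => ZMod.castHom (pow_dvd_pow p (Nat.le_add_right n k)) (ZMod (p ^ n)) (z j)) = i)
      ↔ ((fun j => ZMod.castHom (pow_dvd_pow p (Nat.le_add_right n k)) (ZMod (p ^ n))
          ((fun z : Fin (r + 1) → ZMod (p ^ (n + k)) => fun j => -(z j)) z j))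
          = fun j => -(i j)) := by
    intro z
    simp only [funext_iff, map_neg, neg_inj]
  have hiff₃ : ∀ z : Fin (r + 1) → ZMod (p ^ (n + k)),
      ((fun j => ZMod.castHom (pow_dvd_pow p (Nat.le_add_right n k)) (ZMod (p ^ n)) (z j)) = i)
      ↔ ((fun j => ZMod.castHom (pow_dvd_pow p (Nat.le_add_right n k)) (ZMod (p ^ n))
          ((fun z : Fin (r + 1) → ZMod (p ^ (n + k)) => fun j => -(z j) + 1) z j))
          = fun j => -(i j) + 1) := by
    intro z
    simp only [funext_iff, map_add, map_neg, map_one, add_left_inj, neg_inj]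
  have hiff₄ : ∀ z : Fin (r + 1) → ZMod (p ^ (n + k)),
      ((fun j => ZMod.castHom (pow_dvd_pow p (Nat.le_add_right n k)) (ZMod (p ^ n)) (z j)) = i)
      ↔ ((fun j => ZMod.castHom (pow_dvd_pow p (Nat.le_add_right n k)) (ZMod (p ^ n))
          ((fun z : Fin (r + 1) → ZMod (p ^ (n + k)) => fun j => z j - 1) z j))
          = fun j => i j - 1) := by
    intro z
    simp only [funext_iff, map_sub, map_one, sub_left_inj]
  rw [reindex _ _ (fun j => -(i j)) hb₂ hiff₂, reindex _ _ (fun j => -(i j) + 1) hb₃ hiff₃,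
    reindex _ _ (fun j => i j - 1) hb₄ hiff₄, Finset.mul_sum, Finset.mul_sum,
    ← Finset.sum_add_distrib, ← Finset.sum_add_distrib, ← Finset.sum_sub_distrib]
  refine IsUltrametricDist.norm_sum_le_of_forall_le_of_nonneg
    (mul_nonneg hC0 (zpow_nonneg (by positivity) _)) (fun z _ => ?_)
  -- per-term bound
  show ‖(∏ j : Fin r, ((((z j.castSucc).val : ℤ_[p]) : ℚ_[p])
          - (((z j.succ).val : ℤ_[p]) : ℚ_[p])) ^ e j.castSucc)
        * (((z (Fin.last r)).val : ℤ_[p]) : ℚ_[p]) ^ e (Fin.last r) * G.val (n + k) z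
      + (-1 : ℚ_[p]) ^ (m + 1) *
        ((∏ j : Fin r, ((((-(z j.castSucc)).val : ℤ_[p]) : ℚ_[p])
            - (((-(z j.succ)).val : ℤ_[p]) : ℚ_[p])) ^ e j.castSucc)
          * (((-(z (Fin.last r))).val : ℤ_[p]) : ℚ_[p]) ^ e (Fin.last r)
          * G.val (n + k) (fun j => -(z j)))
      + (-1 : ℚ_[p]) ^ m *
        ((∏ j : Fin r, ((((-(z j.castSucc) + 1).val : ℤ_[p]) : ℚ_[p])
            - (((-(z j.succ) + 1).val : ℤ_[p]) : ℚ_[p])) ^ e j.castSucc)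
          * ((((-(z (Fin.last r)) + 1).val : ℤ_[p]) : ℚ_[p]) - 1) ^ e (Fin.last r)
          * G.val (n + k) (fun j => -(z j) + 1))
      - (∏ j : Fin r, ((((z j.castSucc - 1).val : ℤ_[p]) : ℚ_[p])
            - (((z j.succ - 1).val : ℤ_[p]) : ℚ_[p])) ^ e j.castSucc)
          * ((((z (Fin.last r) - 1).val : ℤ_[p]) : ℚ_[p]) + 1) ^ e (Fin.last r)
          * G.val (n + k) (fun j => z j - 1)‖
    ≤ C' * (p:ℝ) ^ (-((n + k : ℕ) : ℤ))
  have E1 := phi_cast₀ (p := p) r e (fun j => ((z j).val : ℤ_[p]))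
  have E2 := phi_cast₀ (p := p) r e (fun j => (((-(z j)).val : ℤ_[p])))
  have E3 := phi_castm (p := p) r e (fun j => (((-(z j) + 1).val : ℤ_[p])))
  have E4 := phi_castp (p := p) r e (fun j => (((z j - 1).val : ℤ_[p])))
  simp only [E1, E2, E3, E4]
  -- congruence bounds
  have hc₂ : ∀ j : Fin (r + 1), PadicInt.toZModPow (n + k)
        ((((-(z j) : ZMod (p ^ (n + k))).val : ℤ_[p])))
      = PadicInt.toZModPow (n + k) (-(((z j).val : ℤ_[p]))) := fun j => by
    rw [toZModPow_rep, map_neg, toZModPow_rep]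
  have hc₃ : ∀ j : Fin (r + 1), PadicInt.toZModPow (n + k)
        ((((-(z j) + 1 : ZMod (p ^ (n + k))).val : ℤ_[p])))
      = PadicInt.toZModPow (n + k) (-(((z j).val : ℤ_[p])) + 1) := fun j => by
    rw [toZModPow_rep, map_add, map_neg, toZModPow_rep, map_one]
  have hc₄ : ∀ j : Fin (r + 1), PadicInt.toZModPow (n + k)
        ((((z j - 1 : ZMod (p ^ (n + k))).val : ℤ_[p])))
      = PadicInt.toZModPow (n + k) ((((z j).val : ℤ_[p])) - 1) := fun j => by
    rw [toZModPow_rep, map_sub, toZModPow_rep, map_one]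
  have hB₂ := phi_norm_sub r e 0 (n + k) hc₂
  have hB₃ := phi_norm_sub r e (-1) (n + k) hc₃
  have hB₄ := phi_norm_sub r e 1 (n + k) hc₄
  have hneg2 : PhiAux p r e 0 (fun j => -(((z j).val : ℤ_[p])))
      = (-1 : ℤ_[p]) ^ (∑ j, e j) * PhiAux p r e 0 (fun j => ((z j).val : ℤ_[p])) :=
    phi_neg r e _
  have hneg3 : PhiAux p r e (-1) (fun j => -(((z j).val : ℤ_[p])) + 1)
      = (-1 : ℤ_[p]) ^ (∑ j, e j) * PhiAux p r e 0 (fun j => ((z j).val : ℤ_[p])) :=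
    phi_neg_add_one r e _
  have hsub4 : PhiAux p r e 1 (fun j => (((z j).val : ℤ_[p])) - 1)
      = PhiAux p r e 0 (fun j => ((z j).val : ℤ_[p])) :=
    phi_sub_one r e _
  rw [hneg2, ← hm] at hB₂
  rw [hneg3, ← hm] at hB₃
  rw [hsub4] at hB₄
  set A₁ : ℤ_[p] := PhiAux p r e 0 (fun j => ((z j).val : ℤ_[p])) with hA₁
  set B₂ : ℤ_[p] := PhiAux p r e 0 (fun j => (((-(z j)).val : ℤ_[p]))) with hB₂'
  set B₃ : ℤ_[p] := PhiAux p r e (-1) (fun j => (((-(z j) + 1).val : ℤ_[p]))) with hB₃'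
  set B₄ : ℤ_[p] := PhiAux p r e 1 (fun j => (((z j - 1).val : ℤ_[p]))) with hB₄'
  have hε : ((-1 : ℚ_[p]) ^ m) * ((-1 : ℚ_[p]) ^ m) = 1 := by
    rw [← mul_pow]; norm_num
  have hεn : ‖(-1 : ℚ_[p]) ^ m‖ = 1 := by
    rw [norm_pow, norm_neg, norm_one, one_pow]
  have key : ((A₁ : ℤ_[p]) : ℚ_[p]) * G.val (n + k) z
      + (-1 : ℚ_[p]) ^ (m + 1) * (((B₂ : ℤ_[p]) : ℚ_[p]) * G.val (n + k) (fun j => -(z j)))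
      + (-1 : ℚ_[p]) ^ m * (((B₃ : ℤ_[p]) : ℚ_[p]) * G.val (n + k) (fun j => -(z j) + 1))
      - ((B₄ : ℤ_[p]) : ℚ_[p]) * G.val (n + k) (fun j => z j - 1)
    = (-(-1 : ℚ_[p]) ^ m) * ((((B₂ : ℤ_[p]) : ℚ_[p]) - (-1 : ℚ_[p]) ^ m * ((A₁ : ℤ_[p]) : ℚ_[p]))
        * G.val (n + k) (fun j => -(z j)))
      + (-1 : ℚ_[p]) ^ m * ((((B₃ : ℤ_[p]) : ℚ_[p]) - (-1 : ℚ_[p]) ^ m * ((A₁ : ℤ_[p]) : ℚ_[p]))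
        * G.val (n + k) (fun j => -(z j) + 1))
      - ((((B₄ : ℤ_[p]) : ℚ_[p]) - ((A₁ : ℤ_[p]) : ℚ_[p])) * G.val (n + k) (fun j => z j - 1))
      + ((A₁ : ℤ_[p]) : ℚ_[p]) * (G.val (n + k) z - G.val (n + k) (fun j => -(z j))
          + G.val (n + k) (fun j => -(z j) + 1) - G.val (n + k) (fun j => z j - 1)) := by
    rw [pow_succ]
    linear_combination (((A₁ : ℤ_[p]) : ℚ_[p]) * G.val (n + k) (fun j => -(z j) + 1)
      - ((A₁ : ℤ_[p]) : ℚ_[p]) * G.val (n + k) (fun j => -(z j))) * hε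
  rw [key, hsym (n + k) z, mul_zero, add_zero]
  have hpN : (0:ℝ) ≤ (p:ℝ) ^ (-((n + k : ℕ) : ℤ)) := zpow_nonneg (Nat.cast_nonneg p) _
  refine padic_norm_add_add_sub_le _ _ _ ?_ ?_ ?_
  · rw [norm_mul, norm_neg, hεn, one_mul, norm_mul, mul_comm C']
    refine mul_le_mul ?_ (hCle _ _) (norm_nonneg _) hpN
    have hcast : (((B₂ : ℤ_[p]) : ℚ_[p]) - (-1 : ℚ_[p]) ^ m * ((A₁ : ℤ_[p]) : ℚ_[p]))
        = (((B₂ - (-1 : ℤ_[p]) ^ m * A₁ : ℤ_[p])) : ℚ_[p]) := by push_cast; ring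
    rw [hcast, ← PadicInt.norm_def]
    exact hB₂
  · rw [norm_mul, hεn, one_mul, norm_mul, mul_comm C']
    refine mul_le_mul ?_ (hCle _ _) (norm_nonneg _) hpN
    have hcast : (((B₃ : ℤ_[p]) : ℚ_[p]) - (-1 : ℚ_[p]) ^ m * ((A₁ : ℤ_[p]) : ℚ_[p]))
        = (((B₃ - (-1 : ℤ_[p]) ^ m * A₁ : ℤ_[p])) : ℚ_[p]) := by push_cast; ring
    rw [hcast, ← PadicInt.norm_def]
    exact hB₃
  · rw [norm_mul, mul_comm C']
    refine mul_le_mul ?_ (hCle _ _) (norm_nonneg _) hpN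
    have hcast : (((B₄ : ℤ_[p]) : ℚ_[p]) - ((A₁ : ℤ_[p]) : ℚ_[p]))
        = (((B₄ - A₁ : ℤ_[p])) : ℚ_[p]) := by push_cast; ring
    rw [hcast, ← PadicInt.norm_def]
    exact hB₄
end
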